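/- Let Λ be a discrete additive subgroup of ℂ², let p₁, …, pₘ ∈ ℂ², and let Λ₀ = ⋃_{j=1}^{m} (Λ + pⱼ). Then there exists an invertible complex-linear map A : ℂ² → ℂ² such that the set {Im(π¹(A p)) : p ∈ Λ₀} is a closed discrete subset of ℝ, and moreover for all p, q ∈ A(Λ₀) with p ≠ q one has ‖p − q‖ ≥ 1 and either Im(π¹ p) = Im(π¹ q) or |Im(π¹ p) − Im(π¹ q)| ≥ 1. -/

import Mathlib

open Complex

lemma int_gap (c : ℝ) : ∃ δ > 0, ∀ n : ℤ, (n : ℝ) + c ≠ 0 → δ ≤ |(n : ℝ) + c| := by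
  by_cases h : ∃ n₀ : ℤ, (n₀ : ℝ) + c = 0
  · obtain ⟨n₀, hn₀⟩ := h
    refine ⟨1, one_pos, fun n hn => ?_⟩
    have hcast : (n : ℝ) + c = ((n - n₀ : ℤ) : ℝ) := by push_cast; linarith
    have hne : (n - n₀ : ℤ) ≠ 0 := by
      intro h0
      apply hn
      rw [hcast, h0, Int.cast_zero]
    have h1 : (1 : ℤ) ≤ |n - n₀| := Int.one_le_abs hne
    rw [hcast, ← Int.cast_abs]
    exact_mod_cast h1
  · push_neg at h
    refine ⟨min |(⌊-c⌋ : ℝ) + c| |(⌈-c⌉ : ℝ) + c|, lt_min (abs_pos.mpr (h _)) (abs_pos.mpr (h _)), fun n _ => ?_⟩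
    rcases le_or_gt (n : ℝ) (-c) with hle | hlt
    · have h1 : (n : ℤ) ≤ ⌊-c⌋ := Int.le_floor.mpr hle
      have h2 : (n : ℝ) ≤ (⌊-c⌋ : ℝ) := by exact_mod_cast h1
      have h3 : (⌊-c⌋ : ℝ) + c ≤ 0 := by have := Int.floor_le (-c); linarith
      calc min |(⌊-c⌋ : ℝ) + c| |(⌈-c⌉ : ℝ) + c| ≤ |(⌊-c⌋ : ℝ) + c| := min_le_left _ _
        _ = -((⌊-c⌋ : ℝ) + c) := abs_of_nonpos h3
        _ ≤ -((n : ℝ) + c) := by linarith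
        _ ≤ |(n : ℝ) + c| := neg_le_abs _
    · have h1 : ⌈-c⌉ ≤ (n : ℤ) := Int.ceil_le.mpr hlt.le
      have h2 : (⌈-c⌉ : ℝ) ≤ (n : ℝ) := by exact_mod_cast h1
      have h3 : 0 ≤ (⌈-c⌉ : ℝ) + c := by have := Int.le_ceil (-c); linarith
      calc min |(⌊-c⌋ : ℝ) + c| |(⌈-c⌉ : ℝ) + c| ≤ |(⌈-c⌉ : ℝ) + c| := min_le_right _ _
        _ = (⌈-c⌉ : ℝ) + c := abs_of_nonneg h3
        _ ≤ (n : ℝ) + c := by linarith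
        _ ≤ |(n : ℝ) + c| := le_abs_self _

lemma sep_closed (S : Set ℝ) (h : ∀ a ∈ S, ∀ b ∈ S, a ≠ b → 1 ≤ |a - b|) :
    IsClosed S ∧ DiscreteTopology S := by
  constructor
  · rw [← isOpen_compl_iff, Metric.isOpen_iff]
    intro x hx
    by_cases hS : ∃ s ∈ S, |x - s| < 1/2
    · obtain ⟨s, hs, hxs⟩ := hS
      refine ⟨|x - s|, abs_pos.mpr (sub_ne_zero.mpr (fun h0 => hx (h0 ▸ hs))), ?_⟩
      intro y hy
      rw [Metric.mem_ball, Real.dist_eq] at hy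
      intro hyS
      by_cases hys : y = s
      · rw [hys, abs_sub_comm] at hy
        exact absurd hy (lt_irrefl _)
      · have h1 := h y hyS s hs hys
        have h2 : |y - s| ≤ |y - x| + |x - s| := abs_sub_le _ _ _
        rw [abs_sub_comm y x] at h2
        have h4 : |x - y| = |y - x| := abs_sub_comm x y
        linarith
    · push_neg at hS
      refine ⟨1/2, by norm_num, fun y hy hyS => ?_⟩
      rw [Metric.mem_ball, Real.dist_eq] at hy
      have := hS y hyS
      rw [abs_sub_comm] at this
      exact absurd hy (not_lt.mpr this)
  · rw [discreteTopology_subtype_iff]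
    intro x hx
    rw [← Filter.empty_mem_iff_bot]
    have hmem : (Metric.ball x 1 ∩ {x}ᶜ) ∈ nhdsWithin x {x}ᶜ :=
      Filter.inter_mem (nhdsWithin_le_nhds (Metric.ball_mem_nhds x one_pos)) self_mem_nhdsWithin
    refine Filter.mem_of_superset
      (Filter.inter_mem (Filter.mem_inf_of_left hmem)
        (Filter.mem_inf_of_right (Filter.mem_principal_self S))) ?_
    rintro y ⟨⟨hyb, hyne⟩, hyS⟩
    rw [Metric.mem_ball, Real.dist_eq] at hyb
    have h1 := h y hyS x hx (by simpa using hyne)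
    exact absurd hyb (not_lt.mpr h1)

lemma discrete_norm_bound (Λ : AddSubgroup (ℂ × ℂ)) (hΛ : DiscreteTopology Λ) :
    ∃ ε > 0, ∀ v ∈ Λ, v ≠ 0 → ε ≤ ‖v‖ := by
  obtain ⟨V, hV, hV0⟩ := nhds_inter_eq_singleton_of_mem_discrete (isDiscrete_iff_discreteTopology.mpr hΛ) Λ.zero_mem
  obtain ⟨ε, hε, hball⟩ := Metric.mem_nhds_iff.mp hV
  refine ⟨ε, hε, fun v hv hv0 => ?_⟩
  by_contra hcon
  push_neg at hcon
  have hmem : v ∈ V ∩ (Λ : Set (ℂ × ℂ)) :=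
    ⟨hball (by simpa [Metric.mem_ball, dist_zero_right] using hcon), hv⟩
  rw [hV0] at hmem
  exact hv0 hmem

lemma translate_norm_bound (Λ : AddSubgroup (ℂ × ℂ)) (hΛ : DiscreteTopology Λ) (c : ℂ × ℂ) :
    ∃ ε > 0, ∀ v ∈ Λ, v + c ≠ 0 → ε ≤ ‖v + c‖ := by
  obtain ⟨ε₀, hε₀, h₀⟩ := discrete_norm_bound Λ hΛ
  by_cases hc : -c ∈ Λ
  · refine ⟨ε₀, hε₀, fun v hv hvc => ?_⟩
    have : v + c ∈ Λ := by simpa [sub_neg_eq_add] using Λ.sub_mem hv hc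
    exact h₀ _ this hvc
  · have hcl : IsClosed (Λ : Set (ℂ × ℂ)) := AddSubgroup.isClosed_of_discrete
    have hpos : 0 < Metric.infDist (-c) (Λ : Set (ℂ × ℂ)) :=
      (hcl.notMem_iff_infDist_pos ⟨0, Λ.zero_mem⟩).mp hc
    refine ⟨_, hpos, fun v hv _ => ?_⟩
    have h1 := Metric.infDist_le_dist_of_mem (x := -c) hv
    rw [dist_eq_norm] at h1
    have h2 : ‖-c - v‖ = ‖v + c‖ := by rw [show -c - v = -(v + c) by ring, norm_neg]
    linarith [h1, h2.symm.le]

lemma exists_int_functional (Λ : AddSubgroup (ℂ × ℂ)) (hΛ : DiscreteTopology Λ) :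
    ∃ f : (ℂ × ℂ) →ₗ[ℝ] ℝ, f ≠ 0 ∧ ∀ v ∈ Λ, ∃ n : ℤ, f v = n := by
  by_cases hspan : Submodule.span ℝ (Λ : Set (ℂ × ℂ)) = ⊤
  · set L : Submodule ℤ (ℂ × ℂ) := AddSubgroup.toIntSubmodule Λ with hL
    haveI hd : DiscreteTopology L := hΛ
    haveI hzl : IsZLattice ℝ L := ⟨by rw [hL, AddSubgroup.coe_toIntSubmodule]; exact hspan⟩
    haveI : Module.Finite ℤ L := ZLattice.module_finite ℝ L
    haveI : Module.Free ℤ L := ZLattice.module_free ℝ L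
    set b := Module.Free.chooseBasis ℤ L with hb
    set B := Module.Basis.ofZLatticeBasis ℝ L b with hB
    obtain ⟨i₀⟩ : Nonempty (Module.Free.ChooseBasisIndex ℤ L) := B.index_nonempty
    refine ⟨B.coord i₀, ?_, ?_⟩
    · intro h0
      have h1 : B.coord i₀ (B i₀) = 1 := by simp
      rw [h0] at h1
      simp at h1
    · intro v hv
      refine ⟨b.repr ⟨v, hv⟩ i₀, ?_⟩
      have h2 := Module.Basis.ofZLatticeBasis_repr_apply ℝ L b ⟨v, hv⟩ i₀
      simpa [Module.Basis.coord_apply] using h2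
  · obtain ⟨f, hf0, hfmap⟩ := Submodule.exists_dual_map_eq_bot_of_lt_top
      (lt_top_iff_ne_top.mpr hspan) inferInstance
    refine ⟨f, hf0, fun v hv => ⟨0, ?_⟩⟩
    have h1 : f v ∈ Submodule.map f (Submodule.span ℝ (Λ : Set (ℂ × ℂ))) :=
      Submodule.mem_map_of_mem (Submodule.subset_span hv)
    rw [hfmap] at h1
    simpa using h1

lemma exists_ell (f : (ℂ × ℂ) →ₗ[ℝ] ℝ) :
    ∃ ℓ : (ℂ × ℂ) →ₗ[ℂ] ℂ, ∀ v, (ℓ v).im = f v := by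
  have key : ∀ (c : ℂ) (w : ℂ × ℂ), c • w = c.re • w + c.im • (I • w) := by
    intro c w
    calc c • w = ((c.re : ℂ) + (c.im : ℂ) * I) • w := by rw [Complex.re_add_im]
      _ = (c.re : ℂ) • w + ((c.im : ℂ) * I) • w := add_smul _ _ _
      _ = c.re • w + c.im • (I • w) := by
          rw [Complex.coe_smul, mul_smul, Complex.coe_smul]
  have hII : ∀ w : ℂ × ℂ, I • (I • w) = -w := by
    intro w
    rw [smul_smul, Complex.I_mul_I, neg_one_smul]
  refine ⟨{ toFun := fun v => ⟨f (I • v), f v⟩, map_add' := ?_, map_smul' := ?_ }, fun v => rfl⟩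
  · intro a b
    simp [Complex.ext_iff, smul_add]
  · intro c v
    have h1 : f (c • v) = c.re * f v + c.im * f (I • v) := by
      rw [key c v, map_add, f.map_smul c.re v, f.map_smul c.im (I • v)]
      simp only [smul_eq_mul]
    have h2 : f (I • (c • v)) = c.re * f (I • v) - c.im * f v := by
      have hIc : I • (c • v) = c • (I • v) := by rw [smul_smul, smul_smul, mul_comm]
      rw [hIc, key c (I • v), hII, map_add, f.map_smul c.re (I • v), f.map_smul c.im (-v),
        map_neg]
      simp only [smul_eq_mul]
      ring
    simp only [RingHom.id_apply]
    rw [Complex.ext_iff]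
    constructor
    · simpa [Complex.mul_re] using h2
    · simpa [Complex.mul_im] using h1

lemma exists_A0 (ℓ : (ℂ × ℂ) →ₗ[ℂ] ℂ) (hℓ : ℓ ≠ 0) :
    ∃ A₀ : (ℂ × ℂ) ≃ₗ[ℂ] (ℂ × ℂ), ∀ v, (A₀ v).1 = ℓ v := by
  set a := ℓ (1, 0) with ha
  set b := ℓ (0, 1) with hb
  have hdec : ∀ v : ℂ × ℂ, ℓ v = a * v.1 + b * v.2 := by
    intro v
    have hv : v = v.1 • ((1 : ℂ), (0 : ℂ)) + v.2 • ((0 : ℂ), (1 : ℂ)) := by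
      simp [Prod.ext_iff]
    conv_lhs => rw [hv]
    rw [map_add, map_smul, map_smul, smul_eq_mul, smul_eq_mul, ← ha, ← hb]
    ring
  have hab : a ≠ 0 ∨ b ≠ 0 := by
    by_contra hcon
    push_neg at hcon
    apply hℓ
    refine LinearMap.ext fun v => ?_
    rw [hdec v, hcon.1, hcon.2]
    simp
  by_cases hA : a ≠ 0
  · refine ⟨LinearEquiv.ofLinear
      (LinearMap.prod ℓ (LinearMap.snd ℂ ℂ ℂ))
      (LinearMap.prod (a⁻¹ • (LinearMap.fst ℂ ℂ ℂ - b • LinearMap.snd ℂ ℂ ℂ)) (LinearMap.snd ℂ ℂ ℂ))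
      ?_ ?_, fun v => rfl⟩
    · refine LinearMap.ext fun v => Prod.ext ?_ ?_ <;>
        simp [hdec] <;> field_simp <;> ring
    · refine LinearMap.ext fun v => Prod.ext ?_ ?_ <;>
        simp [hdec] <;> field_simp <;> ring
  · push_neg at hA
    have hbne : b ≠ 0 := hab.resolve_left (by simpa using hA)
    refine ⟨LinearEquiv.ofLinear
      (LinearMap.prod ℓ (LinearMap.fst ℂ ℂ ℂ))
      (LinearMap.prod (LinearMap.snd ℂ ℂ ℂ) (b⁻¹ • LinearMap.fst ℂ ℂ ℂ))
      ?_ ?_, fun v => rfl⟩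
    · refine LinearMap.ext fun v => Prod.ext ?_ ?_ <;>
        simp [hdec, hA] <;> field_simp <;> ring
    · refine LinearMap.ext fun v => Prod.ext ?_ ?_ <;>
        simp [hdec, hA] <;> field_simp <;> ring

/-- there is an invertible complex-linear A : ℂ² → ℂ² such that
{Im(π¹(A p)) : p ∈ Λ₀} is closed and discrete in ℝ, and any two distinct points
of A(Λ₀) are at distance ≥ 1, with first-coordinate imaginary parts either equal
or at distance ≥ 1. -/
theorem stmt4 (Λ : AddSubgroup (ℂ × ℂ)) (hΛ : DiscreteTopology Λ)
    (m : ℕ) (p : Fin m → ℂ × ℂ) :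
    ∃ A : (ℂ × ℂ) ≃ₗ[ℂ] (ℂ × ℂ),
      (letI Λ₀ : Set (ℂ × ℂ) := ⋃ j, (fun v => v + p j) '' (Λ : Set (ℂ × ℂ))
       IsClosed {y : ℝ | ∃ q ∈ Λ₀, (A q).1.im = y} ∧
       DiscreteTopology {y : ℝ | ∃ q ∈ Λ₀, (A q).1.im = y} ∧
       ∀ x ∈ (A : (ℂ × ℂ) → (ℂ × ℂ)) '' Λ₀, ∀ y ∈ (A : (ℂ × ℂ) → (ℂ × ℂ)) '' Λ₀,
         x ≠ y → 1 ≤ ‖x - y‖ ∧ (x.1.im = y.1.im ∨ 1 ≤ |x.1.im - y.1.im|)) := by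
  obtain ⟨f, hf0, hfint⟩ := exists_int_functional Λ hΛ
  obtain ⟨ℓ, hℓim⟩ := exists_ell f
  have hℓ0 : ℓ ≠ 0 := by
    intro h0
    apply hf0
    refine LinearMap.ext fun v => ?_
    have h1 := hℓim v
    rw [h0] at h1
    simpa using h1.symm
  obtain ⟨A₀, hA₀⟩ := exists_A0 ℓ hℓ0
  obtain ⟨ε, hεpos, hε⟩ : ∃ ε > 0, ∀ (j k : Fin m), ∀ v ∈ Λ, v + (p j - p k) ≠ 0 →
      ε ≤ ‖v + (p j - p k)‖ := by
    choose E hEpos hE using fun jk : Fin m × Fin m => translate_norm_bound Λ hΛ (p jk.1 - p jk.2)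
    rcases isEmpty_or_nonempty (Fin m) with hm | hm
    · exact ⟨1, one_pos, fun j => (hm.false j).elim⟩
    · refine ⟨Finset.univ.inf' Finset.univ_nonempty E, ?_, ?_⟩
      · exact (Finset.lt_inf'_iff _).mpr fun jk _ => hEpos jk
      · intro j k v hv h
        exact le_trans (Finset.inf'_le _ (Finset.mem_univ (j, k))) (hE (j, k) v hv h)
  obtain ⟨δ, hδpos, hδ⟩ : ∃ δ > 0, ∀ (j k : Fin m) (n : ℤ),
      (n : ℝ) + (f (p j) - f (p k)) ≠ 0 → δ ≤ |(n : ℝ) + (f (p j) - f (p k))| := by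
    choose D hDpos hD using fun jk : Fin m × Fin m => int_gap (f (p jk.1) - f (p jk.2))
    rcases isEmpty_or_nonempty (Fin m) with hm | hm
    · exact ⟨1, one_pos, fun j => (hm.false j).elim⟩
    · refine ⟨Finset.univ.inf' Finset.univ_nonempty D, ?_, ?_⟩
      · exact (Finset.lt_inf'_iff _).mpr fun jk _ => hDpos jk
      · intro j k n h
        exact le_trans (Finset.inf'_le _ (Finset.mem_univ (j, k))) (hD (j, k) n h)
  set L := LinearMap.toContinuousLinearMap (A₀.symm : (ℂ × ℂ) →ₗ[ℂ] (ℂ × ℂ)) with hLdef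
  set C := ‖L‖ + 1 with hC
  have hCpos : 0 < C := by positivity
  set t := max (C / ε) (1 / δ) with ht
  have htpos : 0 < t := lt_max_of_lt_left (div_pos hCpos hεpos)
  have htC : C / ε ≤ t := le_max_left _ _
  have htδ : 1 / δ ≤ t := le_max_right _ _
  have htne : (t : ℂ) ≠ 0 := by exact_mod_cast htpos.ne'
  set A : (ℂ × ℂ) ≃ₗ[ℂ] (ℂ × ℂ) :=
    A₀.trans (LinearEquiv.smulOfNeZero ℂ (ℂ × ℂ) (t : ℂ) htne) with hAdef
  have hAapp : ∀ v, A v = (t : ℂ) • (A₀ v) := fun v => rfl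
  have hAim : ∀ v, (A v).1.im = t * f v := by
    intro v
    rw [hAapp]
    have h1 : ((t : ℂ) • (A₀ v)).1 = (t : ℂ) * (A₀ v).1 := rfl
    rw [h1, hA₀ v]
    simp [Complex.mul_im, hℓim v]
  have hmain : ∀ u w : ℂ × ℂ, (∃ j, ∃ v ∈ Λ, v + p j = u) → (∃ k, ∃ v ∈ Λ, v + p k = w) →
      u ≠ w →
      1 ≤ ‖A u - A w‖ ∧ ((A u).1.im = (A w).1.im ∨ 1 ≤ |(A u).1.im - (A w).1.im|) := by
    rintro u w ⟨j, v₁, hv₁, rfl⟩ ⟨k, v₂, hv₂, rfl⟩ huw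
    have hd : (v₁ + p j) - (v₂ + p k) = (v₁ - v₂) + (p j - p k) := by
      abel
    have hvmem : v₁ - v₂ ∈ Λ := Λ.sub_mem hv₁ hv₂
    have hdne : (v₁ - v₂) + (p j - p k) ≠ 0 := by
      rw [← hd]
      exact sub_ne_zero.mpr huw
    constructor
    · have h1 : A (v₁ + p j) - A (v₂ + p k) = (t : ℂ) • (A₀ ((v₁ - v₂) + (p j - p k))) := by
        rw [hAapp, hAapp, ← smul_sub, ← map_sub, hd]
      have hnt : ‖(t : ℂ)‖ = t := by
        rw [Complex.norm_real, Real.norm_eq_abs, abs_of_pos htpos]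
      have h2 : ε ≤ ‖(v₁ - v₂) + (p j - p k)‖ := hε j k _ hvmem hdne
      have hLA : L (A₀ ((v₁ - v₂) + (p j - p k))) = (v₁ - v₂) + (p j - p k) := by
        simp [hLdef]
      have h3 : ‖(v₁ - v₂) + (p j - p k)‖ ≤ C * ‖A₀ ((v₁ - v₂) + (p j - p k))‖ := by
        calc ‖(v₁ - v₂) + (p j - p k)‖ = ‖L (A₀ ((v₁ - v₂) + (p j - p k)))‖ := by rw [hLA]
          _ ≤ ‖L‖ * ‖A₀ ((v₁ - v₂) + (p j - p k))‖ := L.le_opNorm _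
          _ ≤ C * ‖A₀ ((v₁ - v₂) + (p j - p k))‖ := by
              apply mul_le_mul_of_nonneg_right _ (norm_nonneg _)
              rw [hC]
              linarith
      have h4 : ε / C ≤ ‖A₀ ((v₁ - v₂) + (p j - p k))‖ := by
        rw [div_le_iff₀ hCpos]
        calc ε ≤ C * ‖A₀ ((v₁ - v₂) + (p j - p k))‖ := le_trans h2 h3
          _ = ‖A₀ ((v₁ - v₂) + (p j - p k))‖ * C := mul_comm _ _
      rw [h1, norm_smul, hnt]
      calc (1 : ℝ) = (C / ε) * (ε / C) := by field_simp
        _ ≤ t * (ε / C) := mul_le_mul_of_nonneg_right htC (by positivity)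
        _ ≤ t * ‖A₀ ((v₁ - v₂) + (p j - p k))‖ := mul_le_mul_of_nonneg_left h4 htpos.le
    · obtain ⟨n₁, hn₁⟩ := hfint v₁ hv₁
      obtain ⟨n₂, hn₂⟩ := hfint v₂ hv₂
      have him : (A (v₁ + p j)).1.im - (A (v₂ + p k)).1.im
          = t * (((n₁ - n₂ : ℤ) : ℝ) + (f (p j) - f (p k))) := by
        rw [hAim, hAim, map_add, map_add, hn₁, hn₂]
        push_cast
        ring
      by_cases hzero : ((n₁ - n₂ : ℤ) : ℝ) + (f (p j) - f (p k)) = 0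
      · left
        have h5 : (A (v₁ + p j)).1.im - (A (v₂ + p k)).1.im = 0 := by
          rw [him, hzero, mul_zero]
        linarith
      · right
        rw [him, abs_mul, abs_of_pos htpos]
        have h5 := hδ j k (n₁ - n₂) hzero
        calc (1 : ℝ) = (1 / δ) * δ := by field_simp
          _ ≤ t * δ := mul_le_mul_of_nonneg_right htδ hδpos.le
          _ ≤ t * |((n₁ - n₂ : ℤ) : ℝ) + (f (p j) - f (p k))| :=
              mul_le_mul_of_nonneg_left h5 htpos.le
  have hmemiff : ∀ q : ℂ × ℂ, q ∈ (⋃ j, (fun v => v + p j) '' (Λ : Set (ℂ × ℂ))) ↔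
      ∃ j, ∃ v ∈ Λ, v + p j = q := by
    intro q
    simp only [Set.mem_iUnion, Set.mem_image, SetLike.mem_coe]
  have hthird : ∀ x ∈ (A : (ℂ × ℂ) → (ℂ × ℂ)) '' (⋃ j, (fun v => v + p j) '' (Λ : Set (ℂ × ℂ))),
      ∀ y ∈ (A : (ℂ × ℂ) → (ℂ × ℂ)) '' (⋃ j, (fun v => v + p j) '' (Λ : Set (ℂ × ℂ))),
      x ≠ y → 1 ≤ ‖x - y‖ ∧ (x.1.im = y.1.im ∨ 1 ≤ |x.1.im - y.1.im|) := by
    rintro x ⟨u, hu, rfl⟩ y ⟨w, hw, rfl⟩ hxy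
    have huw : u ≠ w := fun h => hxy (by rw [h])
    exact hmain u w ((hmemiff u).mp hu) ((hmemiff w).mp hw) huw
  have hsep : ∀ a ∈ {y : ℝ | ∃ q ∈ (⋃ j, (fun v => v + p j) '' (Λ : Set (ℂ × ℂ))),
        (A q).1.im = y},
      ∀ b ∈ {y : ℝ | ∃ q ∈ (⋃ j, (fun v => v + p j) '' (Λ : Set (ℂ × ℂ))), (A q).1.im = y},
      a ≠ b → 1 ≤ |a - b| := by
    rintro a ⟨q₁, hq₁, rfl⟩ b ⟨q₂, hq₂, rfl⟩ hab
    have hq : A q₁ ≠ A q₂ := by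
      intro h
      exact hab (by rw [h])
    have := (hmain q₁ q₂ ((hmemiff q₁).mp hq₁) ((hmemiff q₂).mp hq₂)
      (fun h => hq (by rw [h]))).2
    rcases this with h | h
    · exact absurd h hab
    · exact h
  obtain ⟨hcl, hdisc⟩ := sep_closed _ hsep
  exact ⟨A, hcl, hdisc, hthird⟩
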